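/- There is no homogeneous noncommutative polynomial of odd degree that is purely subharmonic: if p is homogeneous of odd degree and Lap[p, h](X, H) is positive semidefinite for all tuples of real symmetric matrices X = (X_1,...,X_g) and all symmetric H of every size n, then Lap[p, h] evaluates to 0 on all such tuples. -/

import Mathlib

noncomputable section

/-- Variables: `some i` is `xᵢ`, `none` is the direction variable `h`. -/
abbrev Var (g : ℕ) := Option (Fin g)

/-- Noncommutative polynomials `ℝ⟨x₁,…,x_g,h⟩`. -/
abbrev NC (g : ℕ) := MonoidAlgebra ℝ (FreeMonoid (Var g))

/-- The monomial corresponding to a word. -/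
def mono (g : ℕ) (w : List (Var g)) : NC g :=
  MonoidAlgebra.of ℝ (FreeMonoid (Var g)) (FreeMonoid.ofList w)

/-- The generator `xᵢ`. -/
def Xv (g : ℕ) (i : Fin g) : NC g := mono g [some i]

/-- The direction variable `h`. -/
def Hv (g : ℕ) : NC g := mono g [none]

/-- Directional derivative of a word in `xᵢ` in direction `h`: sum of the
terms obtained by replacing one occurrence of `xᵢ` by `h`. -/
def wordD (g : ℕ) (i : Fin g) : List (Var g) → NC g
  | [] => 0
  | a :: w =>
      (if a = some i then mono g (none :: w) else 0) + mono g [a] * wordD g i w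

/-- Directional derivative `D[p, xᵢ, h]`, extended linearly from words. -/
def D (g : ℕ) (i : Fin g) (p : NC g) : NC g :=
  Finsupp.sum p.coeff fun w c => c • wordD g i (FreeMonoid.toList w)

/-- The noncommutative Laplacian `Lap[p,h] := ∑ᵢ D[D[p,xᵢ,h],xᵢ,h]`. -/
def Lap (g : ℕ) (p : NC g) : NC g := ∑ i : Fin g, D g i (D g i p)

/-- The transpose: linear anti-automorphism reversing words and fixing generators. -/
def transp (g : ℕ) (p : NC g) : NC g :=
  MonoidAlgebra.mapDomain (fun w => FreeMonoid.ofList (FreeMonoid.toList w).reverse) p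

/-- Evaluation of a polynomial at a tuple of matrices (one for each variable). -/
def eval (g n : ℕ) (M : Var g → Matrix (Fin n) (Fin n) ℝ) (p : NC g) :
    Matrix (Fin n) (Fin n) ℝ :=
  Finsupp.sum p.coeff fun w c => c • ((FreeMonoid.toList w).map M).prod

/-- `p` is a polynomial in `x₁,…,x_g` only (the variable `h` does not occur). -/
def NoH (g : ℕ) (p : NC g) : Prop :=
  ∀ w ∈ p.coeff.support, none ∉ FreeMonoid.toList w

/-- `p` is a homogeneous polynomial of degree `d` in the variables `x₁,…,x_g`. -/
def HomogX (g : ℕ) (d : ℕ) (p : NC g) : Prop :=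
  ∀ w ∈ p.coeff.support, none ∉ FreeMonoid.toList w ∧ (FreeMonoid.toList w).length = d


lemma wordD_support_len (g : ℕ) (i : Fin g) (w : List (Var g)) :
    ∀ u ∈ (wordD g i w).coeff.support, (FreeMonoid.toList u).length = w.length := by
  classical
  induction w with
  | nil => simp [wordD]
  | cons a w ih =>
    intro u hu
    rw [wordD, MonoidAlgebra.coeff_add] at hu
    rcases Finset.mem_union.mp (Finsupp.support_add hu) with h | h
    · by_cases ha : a = some i
      · rw [if_pos ha] at h
        have := Finsupp.support_single_subset h
        simp only [Finset.mem_singleton] at this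
        subst this
        simp [mono, MonoidAlgebra.of_apply] at *
      · rw [if_neg ha] at h
        simp at h
    · have h2 : u ∈ Finset.image (FreeMonoid.ofList [a] * ·) (wordD g i w).coeff.support := by
        apply MonoidAlgebra.support_coeff_single_mul_subset (wordD g i w) (1 : ℝ)
          (FreeMonoid.ofList [a])
        simpa [mono, MonoidAlgebra.of_apply] using h
      obtain ⟨u', hu', rfl⟩ := Finset.mem_image.mp h2
      have : FreeMonoid.toList (FreeMonoid.ofList [a] * u') =
          [a] ++ FreeMonoid.toList u' := rfl
      rw [this]
      simp [ih u' hu']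

lemma D_support_len (g : ℕ) {d : ℕ} {p : NC g}
    (hp : ∀ w ∈ p.coeff.support, (FreeMonoid.toList w).length = d) (i : Fin g) :
    ∀ u ∈ (D g i p).coeff.support, (FreeMonoid.toList u).length = d := by
  classical
  intro u hu
  rw [D, MonoidAlgebra.coeff_finsuppSum] at hu
  obtain ⟨w, hw, hu'⟩ := Finset.mem_biUnion.mp (Finsupp.support_sum hu)
  have hu'' : u ∈ (wordD g i (FreeMonoid.toList w)).coeff.support := Finsupp.support_smul hu'
  rw [wordD_support_len g i _ u hu'']
  exact hp w hw

lemma Lap_support_len (g : ℕ) {d : ℕ} {p : NC g}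
    (hp : ∀ w ∈ p.coeff.support, (FreeMonoid.toList w).length = d) :
    ∀ u ∈ (Lap g p).coeff.support, (FreeMonoid.toList u).length = d := by
  intro u hu
  rw [Lap, MonoidAlgebra.coeff_sum] at hu
  obtain ⟨i, _, hu'⟩ := Finsupp.mem_support_finset_sum u hu
  exact D_support_len g (D_support_len g hp i) i u hu'

lemma prod_map_neg {n : ℕ} (g : ℕ) (M : Var g → Matrix (Fin n) (Fin n) ℝ)
    (w : List (Var g)) :
    (w.map (fun v => -(M v))).prod = (-1 : ℝ) ^ w.length • (w.map M).prod := by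
  induction w with
  | nil => simp
  | cons a w ih =>
    simp only [List.map_cons, List.prod_cons, ih, List.length_cons, pow_succ]
    rw [mul_smul_comm, mul_smul, neg_mul, neg_one_smul]

lemma eval_neg_of_len (g n : ℕ) {d : ℕ} (M : Var g → Matrix (Fin n) (Fin n) ℝ)
    {q : NC g} (hq : ∀ w ∈ q.coeff.support, (FreeMonoid.toList w).length = d) :
    eval g n (fun v => -(M v)) q = (-1 : ℝ) ^ d • eval g n M q := by
  rw [eval, eval, Finsupp.smul_sum]
  apply Finset.sum_congr rfl
  intro w hw
  dsimp only
  rw [prod_map_neg, hq w hw, smul_comm]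

open Matrix in
lemma psd_neg_eq_zero {n : ℕ} {A : Matrix (Fin n) (Fin n) ℝ}
    (h1 : A.PosSemidef) (h2 : (-A).PosSemidef) : A = 0 := by
  have hv : ∀ x, A *ᵥ x = 0 := by
    intro x
    rw [← h1.dotProduct_mulVec_zero_iff]
    have a := h1.dotProduct_mulVec_nonneg x
    have b := h2.dotProduct_mulVec_nonneg x
    rw [Matrix.neg_mulVec, dotProduct_neg] at b
    linarith
  ext i j
  have := congrFun (hv (Pi.single j 1)) i
  simpa [Matrix.mulVec_single] using this

/-- no homogeneous polynomial of odd degree is purely subharmonic: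
if its Laplacian is matrix positive, then the Laplacian evaluates to `0` on all
tuples of symmetric matrices. -/
theorem no_odd_degree_pure_subharmonic (g d : ℕ) (hodd : Odd d) (p : NC g)
    (hhom : HomogX g d p)
    (hpos : ∀ (n : ℕ) (M : Var g → Matrix (Fin n) (Fin n) ℝ),
      (∀ v, (M v).IsSymm) → (eval g n M (Lap g p)).PosSemidef) :
    ∀ (n : ℕ) (M : Var g → Matrix (Fin n) (Fin n) ℝ),
      (∀ v, (M v).IsSymm) → eval g n M (Lap g p) = 0 := by
  intro n M hM
  have hlen : ∀ w ∈ p.coeff.support, (FreeMonoid.toList w).length = d :=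
    fun w hw => (hhom w hw).2
  set N : Var g → Matrix (Fin n) (Fin n) ℝ := fun v => -(M v) with hN
  have hNsymm : ∀ v, (N v).IsSymm := fun v => (hM v).neg
  have hA := hpos n M hM
  have hB := hpos n N hNsymm
  rw [hN, eval_neg_of_len g n M (Lap_support_len g hlen), Odd.neg_one_pow hodd,
    neg_one_smul] at hB
  exact psd_neg_eq_zero hA hB
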